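/- Let E be a finite-dimensional real normed space, let h, θ, γ ≥ 1 be natural numbers, let φ be a Radon measure on E with compact support, and let K be a Borel subset of supp φ. Set η := 1/(h+1) and C := (η(1−η)^h/(32θ))^{h+2}. Let x ∈ E(θ,γ), 0 < r < 1/γ, and 0 < δ < C. Let V be an h-dimensional linear subspace of E and let ν be a Radon measure on E with support contained in x+V := {x+v : v ∈ V} such that ν(B̄(y,ρ)) = ρ^h for every y ∈ x+V and ρ > 0. If there exists Θ > 0 with F_{x,r}(φ⌞K, Θν) + F_{x,r}(φ, Θν) ≤ 2δ r^{h+1}, then for every w ∈ B̄(x, r/2) ∩ (x+V) one has φ(K ∩ B̄(w, δ^{1/(h+2)} r)) > 0; in particular K ∩ B̄(w, δ^{1/(h+2)} r) ≠ ∅. -/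

import Mathlib

open MeasureTheory Metric Filter Set
open scoped ENNReal NNReal Topology

variable {E : Type*}

/-- The support of a measure: points all of whose neighborhoods have positive measure. -/
def msupport [NormedAddCommGroup E] [MeasurableSpace E] (φ : Measure E) : Set E :=
  {x : E | ∀ r : ℝ, 0 < r → 0 < φ (ball x r)}

/-- The set `E(θ,γ)` of points of the support where the measure of balls of radius `r < 1/γ`
is comparable to `r ^ h` with constant `θ`. -/
def Eset [NormedAddCommGroup E] [MeasurableSpace E]
    (φ : Measure E) (h θ γ : ℕ) : Set E :=
  {x : E | x ∈ msupport φ ∧ ∀ r : ℝ, 0 < r → r < 1 / γ →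
    ENNReal.ofReal (r ^ h / θ) ≤ φ (closedBall x r) ∧
    φ (closedBall x r) ≤ ENNReal.ofReal (θ * r ^ h)}

/-- The distance `F_K` between two measures: the supremum of the differences of integrals of
nonnegative `1`-Lipschitz functions vanishing outside `K`. -/
noncomputable def Fdist [NormedAddCommGroup E] [MeasurableSpace E]
    (φ ψ : Measure E) (K : Set E) : ℝ :=
  sSup {d : ℝ | ∃ f : E → ℝ, (∀ x, 0 ≤ f x) ∧ LipschitzWith 1 f ∧ (∀ x ∉ K, f x = 0) ∧
    d = |(∫ x, f x ∂φ) - ∫ x, f x ∂ψ|}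


set_option maxHeartbeats 1000000
set_option linter.unusedSectionVars false
set_option linter.deprecated false
set_option linter.unusedVariables false


lemma pow_sub_pow_le_aux (m : ℕ) {a b : ℝ} (hb : 0 ≤ b) (hab : b ≤ a) :
    a ^ (m+1) - b ^ (m+1) ≤ ((m:ℝ)+1) * a ^ m * (a - b) := by
  have ha : 0 ≤ b := hb
  rw [← geom_sum₂_mul a b (m+1)]
  apply mul_le_mul_of_nonneg_right _ (by linarith)
  have key : ∀ i ∈ Finset.range (m+1), a ^ i * b ^ (m + 1 - 1 - i) ≤ a ^ m := by
    intro i hi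
    have him : i ≤ m := Nat.lt_succ_iff.mp (Finset.mem_range.mp hi)
    have h1 : a ^ i * b ^ (m + 1 - 1 - i) ≤ a ^ i * a ^ (m - i) := by
      have e : m + 1 - 1 - i = m - i := by omega
      rw [e]
      exact mul_le_mul_of_nonneg_left (pow_le_pow_left₀ hb hab _)
        (pow_nonneg (hb.trans hab) i)
    have h2 : a ^ i * a ^ (m - i) = a ^ m := by
      rw [← pow_add]; congr 1; omega
    linarith
  calc (∑ i ∈ Finset.range (m+1), a ^ i * b ^ (m + 1 - 1 - i))
      ≤ (Finset.range (m+1)).card • (a ^ m) := Finset.sum_le_card_nsmul _ _ _ key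
    _ = ((m:ℝ)+1) * a ^ m := by
        rw [Finset.card_range, nsmul_eq_mul]; push_cast; ring

lemma le_pow_sub_pow_aux (m : ℕ) {a b : ℝ} (hb : 0 ≤ b) (hab : b ≤ a) :
    ((m:ℝ)+1) * b ^ m * (a - b) ≤ a ^ (m+1) - b ^ (m+1) := by
  rw [← geom_sum₂_mul a b (m+1)]
  apply mul_le_mul_of_nonneg_right _ (by linarith)
  have key : ∀ i ∈ Finset.range (m+1), b ^ m ≤ a ^ i * b ^ (m + 1 - 1 - i) := by
    intro i hi
    have him : i ≤ m := Nat.lt_succ_iff.mp (Finset.mem_range.mp hi)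
    have h2 : b ^ i * b ^ (m - i) = b ^ m := by
      rw [← pow_add]; congr 1; omega
    have h1 : b ^ i * b ^ (m - i) ≤ a ^ i * b ^ (m - i) :=
      mul_le_mul_of_nonneg_right (pow_le_pow_left₀ hb hab _) (pow_nonneg hb _)
    have e : m + 1 - 1 - i = m - i := by omega
    rw [e]; linarith
  calc ((m:ℝ)+1) * b ^ m = (Finset.range (m+1)).card • (b ^ m) := by
        rw [Finset.card_range, nsmul_eq_mul]; push_cast; ring
    _ ≤ _ := Finset.card_nsmul_le_sum _ _ _ key

lemma sum_pow_upper (h n : ℕ) :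
    ((h:ℝ)+1) * ∑ j ∈ Finset.range n, (j:ℝ)^h ≤ (n:ℝ)^(h+1) := by
  have tel := Finset.sum_range_sub (fun j => ((j:ℕ):ℝ)^(h+1)) n
  simp only [Nat.cast_zero] at tel
  rw [zero_pow (by omega : h + 1 ≠ 0), sub_zero] at tel
  rw [← tel, Finset.mul_sum]
  apply Finset.sum_le_sum
  intro j _
  have key := le_pow_sub_pow_aux h (Nat.cast_nonneg j)
    (by linarith : (j:ℝ) ≤ (j:ℝ)+1)
  have e : (j:ℝ)+1 - (j:ℝ) = 1 := by ring
  rw [e, mul_one] at key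
  push_cast
  linarith

lemma sum_pow_lower (h n : ℕ) :
    (n:ℝ)^(h+1) ≤ ((h:ℝ)+1) * ∑ j ∈ Finset.range n, ((j:ℝ)+1)^h := by
  have tel := Finset.sum_range_sub (fun j => ((j:ℕ):ℝ)^(h+1)) n
  simp only [Nat.cast_zero] at tel
  rw [zero_pow (by omega : h + 1 ≠ 0), sub_zero] at tel
  rw [← tel, Finset.mul_sum]
  apply Finset.sum_le_sum
  intro j _
  have key := pow_sub_pow_le_aux h (Nat.cast_nonneg j)
    (by linarith : (j:ℝ) ≤ (j:ℝ)+1)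
  have e : (j:ℝ)+1 - (j:ℝ) = 1 := by ring
  rw [e, mul_one] at key
  push_cast
  linarith

lemma sum_pow_lower' (h n : ℕ) (hh : 1 ≤ h) (hn : 1 ≤ n) :
    ((n:ℝ)-1)^(h+1) ≤ ((h:ℝ)+1) * ∑ j ∈ Finset.range n, (j:ℝ)^h := by
  obtain ⟨m, rfl⟩ : ∃ m, n = m + 1 := ⟨n-1, by omega⟩
  have e1 : ∑ j ∈ Finset.range (m+1), (j:ℝ)^h
      = (∑ j ∈ Finset.range m, ((j:ℝ)+1)^h) + 0 := by
    rw [Finset.sum_range_succ' (fun j => ((j:ℕ):ℝ)^h) m]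
    congr 1
    · apply Finset.sum_congr rfl; intro j _; push_cast; ring
    · simp [zero_pow (by omega : h ≠ 0)]
  rw [e1, add_zero]
  have e2 : ((m+1:ℕ):ℝ) - 1 = (m:ℝ) := by push_cast; ring
  rw [e2]
  exact sum_pow_lower h m

lemma sum_pow_upper' (h n : ℕ) (hh : 1 ≤ h) :
    ((h:ℝ)+1) * ∑ j ∈ Finset.range n, ((j:ℝ)+1)^h ≤ ((n:ℝ)+1)^(h+1) := by
  have e1 : ∑ j ∈ Finset.range (n+1), (j:ℝ)^h
      = (∑ j ∈ Finset.range n, ((j:ℝ)+1)^h) + 0 := by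
    rw [Finset.sum_range_succ' (fun j => ((j:ℕ):ℝ)^h) n]
    congr 1
    · apply Finset.sum_congr rfl; intro j _; push_cast; ring
    · simp [zero_pow (by omega : h ≠ 0)]
  have := sum_pow_upper h (n+1)
  rw [e1, add_zero] at this
  push_cast at this
  exact this

lemma bern_pow (h m : ℕ) (hm : 2*(h+1) ≤ m) :
    ((m:ℝ))^(h+1) ≤ 2*((m:ℝ)-1)^(h+1) := by
  have hM : 2*((h:ℝ)+1) ≤ (m:ℝ) := by exact_mod_cast hm
  have hM0 : (0:ℝ) < m := by nlinarith
  have hkey := one_add_mul_le_pow (a := -(1/(m:ℝ)))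
    (by rw [neg_le]; have : 1/(m:ℝ) ≤ 1 := by
          rw [div_le_one hM0]; nlinarith
        linarith) (h+1)
  have e : (1 : ℝ) + -(1/(m:ℝ)) = ((m:ℝ)-1)/(m:ℝ) := by field_simp; ring
  rw [e] at hkey
  have hhalf : (1:ℝ)/2 ≤ 1 + ((h+1:ℕ):ℝ) * -(1/(m:ℝ)) := by
    push_cast
    have h1 : ((h:ℝ)+1)/(m:ℝ) ≤ 1/2 := by
      rw [div_le_div_iff₀ hM0 (by norm_num)]; nlinarith
    have e2 : ((h:ℝ)+1) * -(1/(m:ℝ)) = -(((h:ℝ)+1)/(m:ℝ)) := by ring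
    rw [e2]; linarith
  have hq : (1:ℝ)/2 ≤ (((m:ℝ)-1)/(m:ℝ))^(h+1) := le_trans hhalf hkey
  rw [div_pow] at hq
  have hMpow : (0:ℝ) < (m:ℝ)^(h+1) := by positivity
  rw [le_div_iff₀ hMpow] at hq
  linarith


section Aux2
variable [NormedAddCommGroup E] [NormedSpace ℝ E] [FiniteDimensional ℝ E]
    [MeasurableSpace E] [BorelSpace E]

lemma tent_lipschitz (y : E) (s : ℝ) : LipschitzWith 1 (fun z => max (s - dist z y) 0) := by
  apply LipschitzWith.of_dist_le_mul
  intro a b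
  rw [Real.dist_eq, NNReal.coe_one, one_mul]
  have h1 : |max (s - dist a y) 0 - max (s - dist b y) 0|
      ≤ |(s - dist a y) - (s - dist b y)| := abs_max_sub_max_le_abs _ _ 0
  have h2 : |(s - dist a y) - (s - dist b y)| = |dist b y - dist a y| := by
    congr 1; ring
  rw [h2] at h1
  calc |max (s - dist a y) 0 - max (s - dist b y) 0| ≤ |dist b y - dist a y| := h1
    _ ≤ dist b a := abs_dist_sub_le b a y
    _ = dist a b := dist_comm b a

lemma tent_integrable (μ : Measure E) [IsFiniteMeasureOnCompacts μ] (y : E) (s : ℝ) :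
    Integrable (fun z => max (s - dist z y) 0) μ := by
  apply Continuous.integrable_of_hasCompactSupport (tent_lipschitz y s).continuous
  apply HasCompactSupport.intro (isCompact_closedBall y s)
  intro z hz
  simp only [mem_closedBall, not_le] at hz
  exact max_eq_right (by linarith)

lemma indicator_const_integrable (μ : Measure E) [IsFiniteMeasureOnCompacts μ]
    (y : E) (ρ c : ℝ) :
    Integrable ((closedBall y ρ).indicator (fun _ => c)) μ :=
  (integrable_indicator_iff measurableSet_closedBall).2
    (integrableOn_const (isCompact_closedBall y ρ).measure_lt_top.ne)

lemma tent_sandwich (y z : E) {s : ℝ} (hs : 0 < s) {n : ℕ} (hn : 0 < n) :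
    ((∑ j ∈ Finset.range n, (closedBall y (s*(j:ℝ)/n)).indicator (fun _ => s/n) z)
      ≤ max (s - dist z y) 0)
  ∧ (max (s - dist z y) 0
      ≤ ∑ j ∈ Finset.range n, (closedBall y (s*((j:ℝ)+1)/n)).indicator (fun _ => s/n) z) := by
  have hnR : (0:ℝ) < n := by exact_mod_cast hn
  set d := dist z y with hd
  have hd0 : 0 ≤ d := dist_nonneg
  set x0 := max (s - d) 0 with hx0
  have hx0s : x0 ≤ s := max_le (by linarith) hs.le
  have hx00 : 0 ≤ x0 := le_max_right _ _
  set F : ℕ → ℝ := fun j => min (s - s*(j:ℝ)/n) x0 with hF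
  have hFtel : ∑ j ∈ Finset.range n, (F j - F (j+1)) = x0 := by
    rw [Finset.sum_range_sub' F n]
    have e0 : F 0 = x0 := by
      simp only [hF, Nat.cast_zero, mul_zero, zero_div, sub_zero]
      exact min_eq_right hx0s
    have en : F n = 0 := by
      simp only [hF]
      have : s - s*(n:ℝ)/n = 0 := by field_simp; ring
      rw [this]
      exact min_eq_left hx00
    rw [e0, en, sub_zero]
  have hstep : ∀ j : ℕ, s - s*((j:ℝ)+1)/n = (s - s*(j:ℝ)/n) - s/n := by
    intro j; field_simp; ring
  have hcast : ∀ j : ℕ, F (j+1) = min (s - s*((j:ℝ)+1)/n) x0 := by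
    intro j; simp only [hF, Nat.cast_add, Nat.cast_one]
  constructor
  · rw [← hFtel]
    apply Finset.sum_le_sum
    intro j hj
    by_cases hz : z ∈ closedBall y (s*(j:ℝ)/n)
    · rw [Set.indicator_of_mem hz]
      have hdj : d ≤ s*(j:ℝ)/n := mem_closedBall.mp hz
      have h1 : s - s*(j:ℝ)/n ≤ x0 := le_trans (by linarith) (le_max_left (s-d) 0)
      have h2 : s - s*((j:ℝ)+1)/n ≤ x0 := by
        rw [hstep j]
        have : (0:ℝ) ≤ s/n := by positivity
        linarith
      rw [hcast j]
      simp only [hF]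
      rw [min_eq_left h1, min_eq_left h2, hstep j]
      ring_nf
      exact le_refl _
    · rw [Set.indicator_of_notMem hz]
      have : F (j+1) ≤ F j := by
        rw [hcast j]
        simp only [hF]
        apply min_le_min _ (le_refl x0)
        rw [hstep j]
        have : (0:ℝ) ≤ s/n := by positivity
        linarith
      linarith
  · rw [← hFtel]
    apply Finset.sum_le_sum
    intro j hj
    by_cases hz : z ∈ closedBall y (s*((j:ℝ)+1)/n)
    · rw [Set.indicator_of_mem hz]
      have hFj : F j ≤ F (j+1) + s/n := by
        rw [hcast j]
        simp only [hF]
        have h1 : s - s*(j:ℝ)/n ≤ (s - s*((j:ℝ)+1)/n) + s/n := by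
          rw [hstep j]; ring_nf; exact le_refl _
        have h2 : x0 ≤ x0 + s/n := by
          have : (0:ℝ) ≤ s/n := by positivity
          linarith
        calc min (s - s*(j:ℝ)/n) x0
            ≤ min ((s - s*((j:ℝ)+1)/n) + s/n) (x0 + s/n) := min_le_min h1 h2
          _ = min (s - s*((j:ℝ)+1)/n) x0 + s/n := min_add_add_right _ _ _
      linarith
    · rw [Set.indicator_of_notMem hz]
      have hdj : s*((j:ℝ)+1)/n < d := by
        simp only [mem_closedBall, not_le] at hz
        exact hz
      have hjn : (j:ℝ)+1 ≤ n := by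
        have := Finset.mem_range.mp hj
        exact_mod_cast Nat.succ_le_of_lt this
      have hrad : 0 ≤ s - s*((j:ℝ)+1)/n := by
        rw [sub_nonneg, div_le_iff₀ hnR]
        nlinarith
      have hx0le : x0 ≤ s - s*((j:ℝ)+1)/n := max_le (by linarith) hrad
      have e1 : F j = x0 := by
        simp only [hF]
        apply min_eq_right
        refine hx0le.trans ?_
        rw [hstep j]
        have : (0:ℝ) ≤ s/n := by positivity
        linarith
      have e2 : F (j+1) = x0 := by
        rw [hcast j]; exact min_eq_right hx0le
      rw [e1, e2, sub_self]

lemma integral_tent_ge (μ : Measure E) [IsFiniteMeasureOnCompacts μ] (y : E)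
    {s : ℝ} (hs : 0 < s) {n : ℕ} (hn : 0 < n) :
    ∑ j ∈ Finset.range n, (s/n) * (μ (closedBall y (s*(j:ℝ)/n))).toReal
      ≤ ∫ z, max (s - dist z y) 0 ∂μ := by
  have hInd : ∀ j ∈ Finset.range n,
      Integrable ((closedBall y (s*(j:ℝ)/n)).indicator (fun _ => s/n)) μ :=
    fun j _ => indicator_const_integrable μ y _ _
  have e : ∑ j ∈ Finset.range n, (s/n) * (μ (closedBall y (s*(j:ℝ)/n))).toReal
      = ∫ z, ∑ j ∈ Finset.range n,
          (closedBall y (s*(j:ℝ)/n)).indicator (fun _ => s/n) z ∂μ := by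
    rw [integral_finset_sum _ hInd]
    apply Finset.sum_congr rfl
    intro j _
    rw [integral_indicator_const _ measurableSet_closedBall, smul_eq_mul, mul_comm]; rfl
  rw [e]
  exact integral_mono (integrable_finset_sum _ hInd) (tent_integrable μ y s)
    (fun z => (tent_sandwich y z hs hn).1)

lemma integral_tent_le (μ : Measure E) [IsFiniteMeasureOnCompacts μ] (y : E)
    {s : ℝ} (hs : 0 < s) {n : ℕ} (hn : 0 < n) :
    ∫ z, max (s - dist z y) 0 ∂μ
      ≤ ∑ j ∈ Finset.range n, (s/n) * (μ (closedBall y (s*((j:ℝ)+1)/n))).toReal := by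
  have hInd : ∀ j ∈ Finset.range n,
      Integrable ((closedBall y (s*((j:ℝ)+1)/n)).indicator (fun _ => s/n)) μ :=
    fun j _ => indicator_const_integrable μ y _ _
  have e : ∑ j ∈ Finset.range n, (s/n) * (μ (closedBall y (s*((j:ℝ)+1)/n))).toReal
      = ∫ z, ∑ j ∈ Finset.range n,
          (closedBall y (s*((j:ℝ)+1)/n)).indicator (fun _ => s/n) z ∂μ := by
    rw [integral_finset_sum _ hInd]
    apply Finset.sum_congr rfl
    intro j _
    rw [integral_indicator_const _ measurableSet_closedBall, smul_eq_mul, mul_comm]; rfl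
  rw [e]
  exact integral_mono (tent_integrable μ y s) (integrable_finset_sum _ hInd)
    (fun z => (tent_sandwich y z hs hn).2)

lemma integral_admissible_le [Nontrivial E] (μ : Measure E) [IsFiniteMeasureOnCompacts μ]
    (x : E) {r : ℝ} (hr : 0 < r) {f : E → ℝ} (h0 : ∀ z, 0 ≤ f z)
    (hlip : LipschitzWith 1 f) (hvan : ∀ z ∉ closedBall x r, f z = 0) :
    ∫ z, f z ∂μ ≤ (2*r+1) * (μ (closedBall x r)).toReal := by
  obtain ⟨v, hv⟩ := exists_ne (0 : E)
  have hvn : ‖v‖ ≠ 0 := norm_ne_zero_iff.mpr hv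
  set y := x + ((r+1) * ‖v‖⁻¹) • v with hy
  have hyx : dist y x = r + 1 := by
    rw [hy, dist_eq_norm, add_sub_cancel_left, norm_smul, Real.norm_eq_abs,
      abs_of_nonneg (by positivity), mul_assoc, inv_mul_cancel₀ hvn, mul_one]
  have hfy : f y = 0 := hvan y (by
    simp only [mem_closedBall, hyx, not_le]; linarith)
  have hb : ∀ z, f z ≤ ((closedBall x r).indicator (fun _ => 2*r+1)) z := by
    intro z
    by_cases hz : z ∈ closedBall x r
    · rw [Set.indicator_of_mem hz]
      have h1 : f z - f y ≤ dist z y := by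
        have := hlip.dist_le_mul z y
        simp only [Real.dist_eq, NNReal.coe_one, one_mul] at this
        exact le_trans (le_abs_self _) this
      have h2 : dist z y ≤ dist z x + dist x y := dist_triangle z x y
      have h3 : dist x y = r + 1 := by rw [dist_comm]; exact hyx
      have h4 : dist z x ≤ r := mem_closedBall.mp hz
      linarith [hfy]
    · rw [Set.indicator_of_notMem hz, hvan z hz]
  have hIf : Integrable f μ := hlip.continuous.integrable_of_hasCompactSupport
    (HasCompactSupport.intro (isCompact_closedBall x r) hvan)
  calc ∫ z, f z ∂μ ≤ ∫ z, ((closedBall x r).indicator (fun _ => 2*r+1)) z ∂μ :=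
        integral_mono hIf (indicator_const_integrable μ x r _) hb
    _ = (2*r+1) * (μ (closedBall x r)).toReal := by
        rw [integral_indicator_const _ measurableSet_closedBall, smul_eq_mul, mul_comm]; rfl


end Aux2


lemma fdist_bddAbove {E : Type*} [NormedAddCommGroup E] [NormedSpace ℝ E]
    [FiniteDimensional ℝ E] [MeasurableSpace E] [BorelSpace E] [Nontrivial E]
    (μ ψ : Measure E) [IsFiniteMeasureOnCompacts μ] [IsFiniteMeasureOnCompacts ψ]
    (x : E) {r : ℝ} (hr : 0 < r) :
    BddAbove {d : ℝ | ∃ f : E → ℝ, (∀ z, 0 ≤ f z) ∧ LipschitzWith 1 f ∧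
      (∀ z ∉ closedBall x r, f z = 0) ∧ d = |(∫ z, f z ∂μ) - ∫ z, f z ∂ψ|} := by
  refine ⟨(2*r+1) * ((μ (closedBall x r)).toReal + (ψ (closedBall x r)).toReal), ?_⟩
  rintro d ⟨f, h0, hlip, hvan, rfl⟩
  have I1 := integral_admissible_le μ x hr h0 hlip hvan
  have I2 := integral_admissible_le ψ x hr h0 hlip hvan
  have n1 : 0 ≤ ∫ z, f z ∂μ := integral_nonneg h0
  have n2 : 0 ≤ ∫ z, f z ∂ψ := integral_nonneg h0
  have tA : 0 ≤ (μ (closedBall x r)).toReal := ENNReal.toReal_nonneg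
  have tB : 0 ≤ (ψ (closedBall x r)).toReal := ENNReal.toReal_nonneg
  have h2r : (0:ℝ) ≤ 2*r+1 := by linarith
  have pA : 0 ≤ (2*r+1) * (μ (closedBall x r)).toReal := mul_nonneg h2r tA
  have pB : 0 ≤ (2*r+1) * (ψ (closedBall x r)).toReal := mul_nonneg h2r tB
  rw [abs_le]
  constructor <;> [skip; skip] <;> nlinarith [I1, I2, n1, n2, pA, pB]

lemma abs_le_fdist {E : Type*} [NormedAddCommGroup E] [NormedSpace ℝ E]
    [FiniteDimensional ℝ E] [MeasurableSpace E] [BorelSpace E] [Nontrivial E]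
    (μ ψ : Measure E) [IsFiniteMeasureOnCompacts μ] [IsFiniteMeasureOnCompacts ψ]
    (x : E) {r : ℝ} (hr : 0 < r) {f : E → ℝ} (h0 : ∀ z, 0 ≤ f z)
    (hlip : LipschitzWith 1 f) (hvan : ∀ z ∉ closedBall x r, f z = 0) :
    |(∫ z, f z ∂μ) - ∫ z, f z ∂ψ| ≤ Fdist μ ψ (closedBall x r) := by
  unfold Fdist
  exact le_csSup (fdist_bddAbove μ ψ x hr) ⟨f, h0, hlip, hvan, rfl⟩

lemma fdist_nonneg_cb {E : Type*} [NormedAddCommGroup E] [NormedSpace ℝ E]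
    [FiniteDimensional ℝ E] [MeasurableSpace E] [BorelSpace E] [Nontrivial E]
    (μ ψ : Measure E) [IsFiniteMeasureOnCompacts μ] [IsFiniteMeasureOnCompacts ψ]
    (x : E) {r : ℝ} (hr : 0 < r) :
    0 ≤ Fdist μ ψ (closedBall x r) := by
  have hlip0 : LipschitzWith 1 (fun _ : E => (0:ℝ)) := by
    apply LipschitzWith.of_dist_le_mul
    intro a b
    simp only [dist_self, NNReal.coe_one, one_mul]
    exact dist_nonneg
  have h := abs_le_fdist μ ψ x hr (f := fun _ => (0:ℝ)) (fun _ => le_refl 0)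
    hlip0 (fun _ _ => rfl)
  exact le_trans (abs_nonneg _) h

theorem stmt6 [NormedAddCommGroup E] [NormedSpace ℝ E] [FiniteDimensional ℝ E]
    [MeasurableSpace E] [BorelSpace E]
    (h θ γ : ℕ) (h1 : 1 ≤ h) (hθ : 1 ≤ θ) (hγ : 1 ≤ γ)
    (φ : Measure E) [IsLocallyFiniteMeasure φ]
    (hcpt : ∃ Kc : Set E, IsCompact Kc ∧ φ Kcᶜ = 0)
    (K : Set E) (hKmeas : MeasurableSet K) (hKsupp : K ⊆ msupport φ)
    (x : E) (hx : x ∈ Eset φ h θ γ) (r : ℝ) (hr0 : 0 < r) (hrγ : r < 1 / γ)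
    (δ : ℝ) (hδ0 : 0 < δ)
    (hδC : δ < ((1 / ((h : ℝ) + 1)) * (1 - 1 / ((h : ℝ) + 1)) ^ h / (32 * θ)) ^ (h + 2))
    (V : Submodule ℝ E) (hV : Module.finrank ℝ V = h)
    (ν : Measure E) [IsLocallyFiniteMeasure ν]
    (hνsupp : ν (((x + ·) '' (V : Set E))ᶜ) = 0)
    (hνball : ∀ y ∈ (x + ·) '' (V : Set E), ∀ ρ : ℝ, 0 < ρ →
      ν (closedBall y ρ) = ENNReal.ofReal (ρ ^ h))
    (Θ : ℝ) (hΘ : 0 < Θ)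
    (hF : Fdist (φ.restrict K) (ENNReal.ofReal Θ • ν) (closedBall x r) +
          Fdist φ (ENNReal.ofReal Θ • ν) (closedBall x r) ≤ 2 * δ * r ^ (h + 1)) :
    ∀ w ∈ closedBall x (r / 2) ∩ ((x + ·) '' (V : Set E)),
      0 < φ (K ∩ closedBall w (δ ^ ((1 : ℝ) / ((h : ℝ) + 2)) * r)) ∧
      (K ∩ closedBall w (δ ^ ((1 : ℝ) / ((h : ℝ) + 2)) * r)).Nonempty := by
  classical
  have hθR : (1:ℝ) ≤ (θ:ℝ) := by exact_mod_cast hθ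
  have hθ0 : (0:ℝ) < (θ:ℝ) := by linarith
  have hhR : (1:ℝ) ≤ (h:ℝ) := by exact_mod_cast h1
  have hh1ne : ((h:ℝ)+1) ≠ 0 := by positivity
  have hθne : (θ:ℝ) ≠ 0 := by positivity
  set η : ℝ := 1 / ((h:ℝ) + 1) with hη
  have hηpos : 0 < η := by rw [hη]; positivity
  have hη12 : η ≤ 1/2 := by
    rw [hη, div_le_div_iff₀ (by linarith) (by norm_num)]; linarith
  have h1mη0 : 0 < 1 - η := by linarith
  set c32 : ℝ := η * (1 - η) ^ h / (32 * (θ:ℝ)) with hc32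
  have hc32pos : 0 < c32 := by
    rw [hc32]; exact div_pos (mul_pos hηpos (pow_pos h1mη0 h)) (by positivity)
  set ε : ℝ := δ ^ ((1:ℝ) / ((h:ℝ) + 2)) with hε
  have hεpos : 0 < ε := Real.rpow_pos_of_pos hδ0 _
  have hεpow : ε ^ (h+2) = δ := by
    rw [hε, ← Real.rpow_natCast (δ ^ ((1:ℝ)/((h:ℝ)+2))) (h+2), ← Real.rpow_mul hδ0.le]
    push_cast
    rw [one_div, inv_mul_cancel₀ (by positivity), Real.rpow_one]
  have hεlt : ε < c32 := by
    have h2 : ε < (c32 ^ (h+2)) ^ ((1:ℝ)/((h:ℝ)+2)) := by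
      rw [hε]
      exact Real.rpow_lt_rpow hδ0.le hδC (by positivity)
    have e : ((c32 ^ (h+2)) : ℝ) ^ ((1:ℝ)/((h:ℝ)+2)) = c32 := by
      rw [← Real.rpow_natCast c32 (h+2), ← Real.rpow_mul hc32pos.le]
      push_cast
      rw [mul_one_div, div_self (by positivity), Real.rpow_one]
    rw [e] at h2; exact h2
  have hc32le : c32 ≤ (η/(θ:ℝ))/32 := by
    have e : (η/(θ:ℝ))/32 = η / (32*(θ:ℝ)) := by ring
    rw [hc32, e]
    gcongr
    have hp1 : (1-η)^h ≤ 1 := pow_le_one₀ (by linarith) (by linarith)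
    nlinarith [hp1, hηpos]
  have hτ2 : η/(θ:ℝ) ≤ 1/2 := le_trans (div_le_self hηpos.le hθR) hη12
  have hεb : ε < (η/(θ:ℝ))/32 := lt_of_lt_of_le hεlt hc32le
  have hε164 : ε ≤ 1/64 := by linarith
  set n : ℕ := 2*(h+1) with hn
  have hn0 : 0 < n := by omega
  have hnR : (0:ℝ) < (n:ℝ) := by exact_mod_cast hn0
  have hbern : ((n:ℝ))^(h+1) ≤ 2*((n:ℝ)-1)^(h+1) := bern_pow h n (le_refl _)
  have hbern2 : ((n:ℝ)+1)^(h+1) ≤ 2*((n:ℝ))^(h+1) := by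
    have h' := bern_pow h (n+1) (by omega)
    push_cast at h'
    have e : ((n:ℝ)+1-1) = (n:ℝ) := by ring
    rw [e] at h'
    exact h'
  have hsum_low : ((n:ℝ)-1)^(h+1)/((h:ℝ)+1) ≤ ∑ j ∈ Finset.range n, (j:ℝ)^h := by
    rw [div_le_iff₀ (by positivity), mul_comm]
    exact sum_pow_lower' h n h1 (by omega)
  haveI hNT : Nontrivial E := by
    apply Module.nontrivial_of_finrank_pos (R := ℝ)
    have h2 := Submodule.finrank_le V
    omega
  set μν : Measure E := ENNReal.ofReal Θ • ν with hμν
  haveI : IsFiniteMeasureOnCompacts μν := by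
    constructor
    intro Kk hKk
    rw [hμν, Measure.smul_apply, smul_eq_mul]
    exact ENNReal.mul_lt_top ENNReal.ofReal_lt_top hKk.measure_lt_top
  haveI : IsFiniteMeasureOnCompacts (φ.restrict K) := by
    constructor
    intro Kk hKk
    exact lt_of_le_of_lt (Measure.restrict_apply_le K Kk) hKk.measure_lt_top
  have hFd1 : 0 ≤ Fdist (φ.restrict K) μν (closedBall x r) := fdist_nonneg_cb _ _ x hr0
  have hFd2 : 0 ≤ Fdist φ μν (closedBall x r) := fdist_nonneg_cb _ _ x hr0
  have hF1 : Fdist (φ.restrict K) μν (closedBall x r) ≤ 2*δ*r^(h+1) := by linarith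
  have hF2 : Fdist φ μν (closedBall x r) ≤ 2*δ*r^(h+1) := by linarith
  intro w hw
  obtain ⟨hw1, hw2⟩ := hw
  have hwx : dist w x ≤ r/2 := mem_closedBall.mp hw1
  have hximg : x ∈ (x + ·) '' (V : Set E) := ⟨0, Submodule.zero_mem V, by simp⟩
  have key : 0 < φ (K ∩ closedBall w (ε * r)) := by
    by_contra hcon
    push_neg at hcon
    have hzero : φ (K ∩ closedBall w (ε * r)) = 0 := le_zero_iff.mp hcon
    have hballw : ∀ ρ : ℝ, 0 < ρ → (μν (closedBall w ρ)).toReal = Θ * ρ^h := by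
      intro ρ hρ
      rw [hμν, Measure.smul_apply, smul_eq_mul, hνball w hw2 ρ hρ,
        ← ENNReal.ofReal_mul hΘ.le, ENNReal.toReal_ofReal (by positivity)]
    have hballx : ∀ ρ : ℝ, 0 < ρ → (μν (closedBall x ρ)).toReal = Θ * ρ^h := by
      intro ρ hρ
      rw [hμν, Measure.smul_apply, smul_eq_mul, hνball x hximg ρ hρ,
        ← ENNReal.ofReal_mul hΘ.le, ENNReal.toReal_ofReal (by positivity)]
    -- STEP A
    set sA : ℝ := ε * r with hsA
    have hsA0 : 0 < sA := mul_pos hεpos hr0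
    have hsAr2 : sA ≤ r/2 := by rw [hsA]; nlinarith
    have hA1 : ∀ j ∈ Finset.range n,
        (sA/n) * (Θ * (sA*(j:ℝ)/n)^h)
          ≤ (sA/n) * (μν (closedBall w (sA*(j:ℝ)/n))).toReal := by
      intro j _
      rcases Nat.eq_zero_or_pos j with hj0 | hj0
      · subst hj0
        simp only [Nat.cast_zero, mul_zero, zero_div]
        rw [zero_pow (by omega : h ≠ 0), mul_zero, mul_zero]
        positivity
      · have hjR : (0:ℝ) < (j:ℝ) := by exact_mod_cast hj0
        have hρ : 0 < sA*(j:ℝ)/n := by positivity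
        rw [hballw _ hρ]
    have hA2 : ∑ j ∈ Finset.range n, (sA/n) * (Θ * (sA*(j:ℝ)/n)^h)
        ≤ ∫ z, max (sA - dist z w) 0 ∂μν :=
      le_trans (Finset.sum_le_sum hA1) (integral_tent_ge μν w hsA0 hn0)
    have hA3 : ∑ j ∈ Finset.range n, (sA/n) * (Θ * (sA*(j:ℝ)/n)^h)
        = Θ*(sA/n)^(h+1) * ∑ j ∈ Finset.range n, (j:ℝ)^h := by
      rw [Finset.mul_sum]
      apply Finset.sum_congr rfl
      intro j _
      have e : sA*(j:ℝ)/(n:ℝ) = (sA/n)*(j:ℝ) := by ring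
      rw [e, mul_pow, pow_succ]
      ring
    have epowA : (sA/n)^(h+1) * ((n:ℝ))^(h+1) = sA^(h+1) := by
      rw [div_pow]; field_simp
    have hA5 : Θ * (sA^(h+1)/(2*((h:ℝ)+1))) ≤ ∫ z, max (sA - dist z w) 0 ∂μν := by
      have h5a : sA^(h+1)/2 ≤ (sA/n)^(h+1) * ((n:ℝ)-1)^(h+1) := by
        have h5b := mul_le_mul_of_nonneg_left hbern
          (pow_nonneg (by positivity : (0:ℝ) ≤ sA/n) (h+1))
        have e2 : (sA/(n:ℝ))^(h+1)*(2*((n:ℝ)-1)^(h+1))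
            = 2*((sA/(n:ℝ))^(h+1)*((n:ℝ)-1)^(h+1)) := by ring
        rw [epowA, e2] at h5b
        linarith
      have h5c := mul_le_mul_of_nonneg_left h5a
        (by positivity : (0:ℝ) ≤ Θ/((h:ℝ)+1))
      calc Θ * (sA^(h+1)/(2*((h:ℝ)+1))) = Θ/((h:ℝ)+1) * (sA^(h+1)/2) := by field_simp
        _ ≤ Θ/((h:ℝ)+1) * ((sA/n)^(h+1) * ((n:ℝ)-1)^(h+1)) := h5c
        _ = Θ*(sA/n)^(h+1) * (((n:ℝ)-1)^(h+1)/((h:ℝ)+1)) := by ring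
        _ ≤ Θ*(sA/n)^(h+1) * ∑ j ∈ Finset.range n, (j:ℝ)^h :=
            mul_le_mul_of_nonneg_left hsum_low (by positivity)
        _ = ∑ j ∈ Finset.range n, (sA/n) * (Θ * (sA*(j:ℝ)/n)^h) := hA3.symm
        _ ≤ _ := hA2
    have hA6 : ∫ z, max (sA - dist z w) 0 ∂(φ.restrict K) ≤ 0 := by
      refine le_trans (integral_tent_le (φ.restrict K) w hsA0 hn0) (le_of_eq ?_)
      apply Finset.sum_eq_zero
      intro j hj
      have hjn : (j:ℝ)+1 ≤ (n:ℝ) := by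
        exact_mod_cast Nat.succ_le_of_lt (Finset.mem_range.mp hj)
      have hsub : closedBall w (sA*((j:ℝ)+1)/n) ⊆ closedBall w sA := by
        apply closedBall_subset_closedBall
        rw [div_le_iff₀ hnR]
        nlinarith
      have hzero' : (φ.restrict K) (closedBall w (sA*((j:ℝ)+1)/n)) = 0 := by
        rw [Measure.restrict_apply measurableSet_closedBall]
        apply measure_mono_null _ hzero
        intro z hz
        exact ⟨hz.2, hsub hz.1⟩
      rw [hzero']
      simp
    have hvanA : ∀ z ∉ closedBall x r, max (sA - dist z w) 0 = 0 := by
      intro z hz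
      apply max_eq_right
      have hzx : r < dist z x := by simpa [mem_closedBall, not_le] using hz
      have htr : dist z x ≤ dist z w + dist w x := dist_triangle z w x
      linarith
    have habsA := abs_le_fdist (φ.restrict K) μν x hr0
      (f := fun z => max (sA - dist z w) 0) (fun z => le_max_right _ _)
      (tent_lipschitz w sA) hvanA
    have hFA : (∫ z, max (sA - dist z w) 0 ∂μν)
        - ∫ z, max (sA - dist z w) 0 ∂(φ.restrict K) ≤ 2*δ*r^(h+1) := by
      have h2 := neg_abs_le ((∫ z, max (sA - dist z w) 0 ∂(φ.restrict K))
        - ∫ z, max (sA - dist z w) 0 ∂μν)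
      linarith [habsA, hF1]
    have hstepA : Θ * (sA^(h+1)/(2*((h:ℝ)+1))) ≤ 2*δ*r^(h+1) := by
      linarith [hA5, hA6, hFA]
    have hP : (0:ℝ) < ε^(h+1)*r^(h+1) := by positivity
    have hΘA : Θ * η ≤ 4*ε := by
      have e1 : sA^(h+1) = ε^(h+1)*r^(h+1) := by rw [hsA, mul_pow]
      have e2 : δ = ε*(ε^(h+1)) := by rw [← hεpow, pow_succ]; ring
      have keyA : Θ * η * (ε^(h+1)*r^(h+1)) ≤ 4*ε*(ε^(h+1)*r^(h+1)) := by
        calc Θ * η * (ε^(h+1)*r^(h+1))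
            = 2*(Θ * ((ε^(h+1)*r^(h+1))/(2*((h:ℝ)+1)))) := by rw [hη]; field_simp
          _ ≤ 2*(2*δ*r^(h+1)) := by rw [← e1]; linarith [hstepA]
          _ = 4*ε*(ε^(h+1)*r^(h+1)) := by rw [e2]; ring
      exact le_of_mul_le_mul_right keyA hP
    -- STEP B
    set sB : ℝ := r/2 with hsB
    have hsB0 : 0 < sB := by rw [hsB]; linarith
    have hB1 : ∀ j ∈ Finset.range n,
        (sB/n) * ((sB*(j:ℝ)/n)^h/(θ:ℝ))
          ≤ (sB/n) * (φ (closedBall x (sB*(j:ℝ)/n))).toReal := by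
      intro j hj
      rcases Nat.eq_zero_or_pos j with hj0 | hj0
      · subst hj0
        simp only [Nat.cast_zero, mul_zero, zero_div]
        rw [zero_pow (by omega : h ≠ 0), zero_div, mul_zero]
        positivity
      · have hjR : (0:ℝ) < (j:ℝ) := by exact_mod_cast hj0
        have hρ0 : 0 < sB*(j:ℝ)/n := by positivity
        have hjn : (j:ℝ) ≤ (n:ℝ) := by
          exact_mod_cast le_of_lt (Finset.mem_range.mp hj)
        have hργ : sB*(j:ℝ)/n < 1/(γ:ℝ) := by
          have hle : sB*(j:ℝ)/n ≤ sB := by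
            rw [div_le_iff₀ hnR]; nlinarith
          have : sB < 1/(γ:ℝ) := by rw [hsB]; linarith
          linarith
        have hb := (hx.2 _ hρ0 hργ).1
        have hfin : φ (closedBall x (sB*(j:ℝ)/n)) ≠ ⊤ :=
          (isCompact_closedBall _ _).measure_lt_top.ne
        have htr := (ENNReal.ofReal_le_iff_le_toReal hfin).mp hb
        exact mul_le_mul_of_nonneg_left htr (by positivity)
    have hB2 : ∑ j ∈ Finset.range n, (sB/n) * ((sB*(j:ℝ)/n)^h/(θ:ℝ))
        ≤ ∫ z, max (sB - dist z x) 0 ∂φ :=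
      le_trans (Finset.sum_le_sum hB1) (integral_tent_ge φ x hsB0 hn0)
    have hB3 : ∑ j ∈ Finset.range n, (sB/n) * ((sB*(j:ℝ)/n)^h/(θ:ℝ))
        = (1/(θ:ℝ))*(sB/n)^(h+1) * ∑ j ∈ Finset.range n, (j:ℝ)^h := by
      rw [Finset.mul_sum]
      apply Finset.sum_congr rfl
      intro j _
      have e : sB*(j:ℝ)/(n:ℝ) = (sB/n)*(j:ℝ) := by ring
      rw [e, mul_pow, pow_succ]
      ring
    have epowB : (sB/n)^(h+1) * ((n:ℝ))^(h+1) = sB^(h+1) := by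
      rw [div_pow]; field_simp
    have hB5 : sB^(h+1)/(2*((h:ℝ)+1)*(θ:ℝ)) ≤ ∫ z, max (sB - dist z x) 0 ∂φ := by
      have h5a : sB^(h+1)/2 ≤ (sB/n)^(h+1) * ((n:ℝ)-1)^(h+1) := by
        have h5b := mul_le_mul_of_nonneg_left hbern
          (pow_nonneg (by positivity : (0:ℝ) ≤ sB/n) (h+1))
        have e2 : (sB/(n:ℝ))^(h+1)*(2*((n:ℝ)-1)^(h+1))
            = 2*((sB/(n:ℝ))^(h+1)*((n:ℝ)-1)^(h+1)) := by ring
        rw [epowB, e2] at h5b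
        linarith
      have h5c := mul_le_mul_of_nonneg_left h5a
        (by positivity : (0:ℝ) ≤ 1/(((h:ℝ)+1)*(θ:ℝ)))
      calc sB^(h+1)/(2*((h:ℝ)+1)*(θ:ℝ))
          = 1/(((h:ℝ)+1)*(θ:ℝ)) * (sB^(h+1)/2) := by field_simp
        _ ≤ 1/(((h:ℝ)+1)*(θ:ℝ)) * ((sB/n)^(h+1) * ((n:ℝ)-1)^(h+1)) := h5c
        _ = (1/(θ:ℝ))*(sB/n)^(h+1) * (((n:ℝ)-1)^(h+1)/((h:ℝ)+1)) := by
            rw [one_div (((h:ℝ)+1)*(θ:ℝ)), mul_inv]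
            ring
        _ ≤ (1/(θ:ℝ))*(sB/n)^(h+1) * ∑ j ∈ Finset.range n, (j:ℝ)^h :=
            mul_le_mul_of_nonneg_left hsum_low (by positivity)
        _ = ∑ j ∈ Finset.range n, (sB/n) * ((sB*(j:ℝ)/n)^h/(θ:ℝ)) := hB3.symm
        _ ≤ _ := hB2
    have hB6 : ∫ z, max (sB - dist z x) 0 ∂μν ≤ Θ*(2*sB^(h+1))/((h:ℝ)+1) := by
      refine le_trans (integral_tent_le μν x hsB0 hn0) ?_
      have hB7 : ∀ j ∈ Finset.range n,
          (sB/n) * (μν (closedBall x (sB*((j:ℝ)+1)/n))).toReal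
            = (sB/n) * (Θ * (sB*((j:ℝ)+1)/n)^h) := by
        intro j _
        have hρ : 0 < sB*((j:ℝ)+1)/n := by positivity
        rw [hballx _ hρ]
      rw [Finset.sum_congr rfl hB7]
      have hB8 : ∑ j ∈ Finset.range n, (sB/n) * (Θ * (sB*((j:ℝ)+1)/n)^h)
          = Θ*(sB/n)^(h+1) * ∑ j ∈ Finset.range n, ((j:ℝ)+1)^h := by
        rw [Finset.mul_sum]
        apply Finset.sum_congr rfl
        intro j _
        have e : sB*((j:ℝ)+1)/(n:ℝ) = (sB/n)*((j:ℝ)+1) := by ring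
        rw [e, mul_pow, pow_succ]
        ring
      rw [hB8]
      have hsum_up : ∑ j ∈ Finset.range n, ((j:ℝ)+1)^h ≤ ((n:ℝ)+1)^(h+1)/((h:ℝ)+1) := by
        rw [le_div_iff₀ (by positivity), mul_comm]
        exact sum_pow_upper' h n h1
      calc Θ*(sB/n)^(h+1) * ∑ j ∈ Finset.range n, ((j:ℝ)+1)^h
          ≤ Θ*(sB/n)^(h+1) * (((n:ℝ)+1)^(h+1)/((h:ℝ)+1)) :=
            mul_le_mul_of_nonneg_left hsum_up (by positivity)
        _ ≤ Θ*(sB/n)^(h+1) * ((2*((n:ℝ))^(h+1))/((h:ℝ)+1)) := by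
            apply mul_le_mul_of_nonneg_left _ (by positivity)
            gcongr
        _ = Θ*((sB/n)^(h+1)*((n:ℝ))^(h+1))*2/((h:ℝ)+1) := by ring
        _ = Θ*(2*sB^(h+1))/((h:ℝ)+1) := by rw [epowB]; ring
    have hvanB : ∀ z ∉ closedBall x r, max (sB - dist z x) 0 = 0 := by
      intro z hz
      have hzx : r < dist z x := by simpa [mem_closedBall, not_le] using hz
      apply max_eq_right
      rw [hsB]
      linarith
    have habsB := abs_le_fdist φ μν x hr0
      (f := fun z => max (sB - dist z x) 0) (fun z => le_max_right _ _)
      (tent_lipschitz x sB) hvanB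
    have hFB : (∫ z, max (sB - dist z x) 0 ∂φ)
        - ∫ z, max (sB - dist z x) 0 ∂μν ≤ 2*δ*r^(h+1) := by
      have h2 := le_abs_self ((∫ z, max (sB - dist z x) 0 ∂φ)
        - ∫ z, max (sB - dist z x) 0 ∂μν)
      linarith [habsB, hF2]
    have hstepB : sB^(h+1)/(2*((h:ℝ)+1)*(θ:ℝ)) - Θ*(2*sB^(h+1))/((h:ℝ)+1)
        ≤ 2*δ*r^(h+1) := by
      linarith [hB5, hB6, hFB]
    have hQ : (0:ℝ) < sB^(h+1) := by positivity
    have hΘB : η/(2*(θ:ℝ)) - 2*Θ*η ≤ 2^(h+2)*δ := by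
      have e3 : r^(h+1) = 2^(h+1)*sB^(h+1) := by
        rw [hsB, div_pow]
        field_simp
      have keyB : (η/(2*(θ:ℝ)) - 2*Θ*η)*sB^(h+1) ≤ (2^(h+2)*δ)*sB^(h+1) := by
        calc (η/(2*(θ:ℝ)) - 2*Θ*η)*sB^(h+1)
            = sB^(h+1)/(2*((h:ℝ)+1)*(θ:ℝ)) - Θ*(2*sB^(h+1))/((h:ℝ)+1) := by
              rw [hη]; field_simp
          _ ≤ 2*δ*r^(h+1) := hstepB
          _ = (2^(h+2)*δ)*sB^(h+1) := by rw [e3]; ring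
      exact le_of_mul_le_mul_right keyB hQ
    have hδsm : 2^(h+2)*δ ≤ ε/16 := by
      rw [← hεpow, ← mul_pow]
      have h2ε0 : (0:ℝ) ≤ 2*ε := by linarith
      have h2ε : 2*ε ≤ 1/32 := by linarith
      have hp1 : (2*ε)^(h+1) ≤ 1/32 := by
        calc (2*ε)^(h+1) ≤ (1/32:ℝ)^(h+1) := pow_le_pow_left₀ h2ε0 h2ε _
          _ ≤ 1/32 := pow_le_of_le_one (by norm_num) (by norm_num) (by omega)
      calc (2*ε)^(h+2) = (2*ε)^(h+1)*(2*ε) := pow_succ _ _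
        _ ≤ (1/32)*(2*ε) := mul_le_mul_of_nonneg_right hp1 h2ε0
        _ = ε/16 := by ring
    have eτ : η/(2*(θ:ℝ)) = (η/(θ:ℝ))/2 := by ring
    have hτpos : 0 < η/(θ:ℝ) := by positivity
    linarith [hΘA, hΘB, hδsm, hεb, eτ, hτpos]
  refine ⟨key, ?_⟩
  rcases Set.eq_empty_or_nonempty (K ∩ closedBall w (ε * r)) with he | hne
  · rw [he, measure_empty] at key
    exact absurd key (lt_irrefl 0)
  · exact hne
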